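/- Let H be a complex Hilbert space, 𝒱 and 𝒲 closed subspaces with H = 𝒱 ⊕ 𝒲ᗮ, and P = π_{𝒱,𝒲ᗮ}. Let (W,w) be a fusion frame for 𝒲 with synthesis operator T_W, let (V,v) be a fusion frame for 𝒱 with synthesis operator T_V, and let Q : K_W → K_V be a bounded operator with ‖T_V Q T_W* − P‖ ≤ ε for some ε < 1. Set S = T_V Q T_W*. Then S maps H into 𝒱, the restriction S|_𝒱 : 𝒱 → 𝒱 is a bijective bounded operator, and its inverse A : 𝒱 → 𝒱 satisfies A(S f) = P f for every f ∈ H (note S f ∈ 𝒱 and P f ∈ 𝒱). -/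

import Mathlib

open scoped ENNReal
set_option synthInstance.maxHeartbeats 1000000
set_option maxHeartbeats 1000000
noncomputable section

/-- If `(V,v)` is an `ε`-approximate oblique `Q`-dual fusion frame of `(W,w)` on `𝒱` with
`ε < 1`, then `S = T_V Q T_W*` maps `H` into `𝒱`, its restriction `S|_𝒱 : 𝒱 → 𝒱` is a
bijective bounded operator, and the inverse `A` of this restriction satisfies
`A (S f) = P f` for every `f ∈ H`, where `P = π_{𝒱,𝒲ᗮ}`. -/
theorem approx_dual_restriction_invertible
    {H : Type*} [NormedAddCommGroup H] [InnerProductSpace ℂ H] [CompleteSpace H]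
    {I : Type*} [Countable I]
    (𝒱 𝒲 : Submodule ℂ H) [CompleteSpace 𝒱] [CompleteSpace 𝒲]
    (P : H →L[ℂ] H) (hPidem : P ∘L P = P)
    (hPran : LinearMap.range (P : H →ₗ[ℂ] H) = 𝒱) (hPker : LinearMap.ker (P : H →ₗ[ℂ] H) = 𝒲ᗮ)
    (W : I → Submodule ℂ H) [∀ i, CompleteSpace (W i)] (hW : ∀ i, W i ≤ 𝒲)
    (w : I → ℝ) (hw : ∀ i, 0 < w i)
    (TW : lp (fun i => W i) 2 →L[ℂ] H)
    (hTW : ∀ g : lp (fun i => W i) 2, HasSum (fun i => (w i : ℂ) • (g i : H)) (TW g))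
    (hWfr : LinearMap.range (TW : lp (fun i => W i) 2 →ₗ[ℂ] H) = 𝒲)
    (V : I → Submodule ℂ H) [∀ i, CompleteSpace (V i)] (hV : ∀ i, V i ≤ 𝒱)
    (v : I → ℝ) (hv : ∀ i, 0 < v i)
    (TV : lp (fun i => V i) 2 →L[ℂ] H)
    (hTV : ∀ g : lp (fun i => V i) 2, HasSum (fun i => (v i : ℂ) • (g i : H)) (TV g))
    (hVfr : LinearMap.range (TV : lp (fun i => V i) 2 →ₗ[ℂ] H) = 𝒱)
    (Q : lp (fun i => W i) 2 →L[ℂ] lp (fun i => V i) 2)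
    (ε : ℝ) (hε : ε < 1)
    (hdual : ‖TV ∘L Q ∘L ContinuousLinearMap.adjoint TW - P‖ ≤ ε) :
    (∀ f : H, (TV ∘L Q ∘L ContinuousLinearMap.adjoint TW) f ∈ 𝒱) ∧
    ∃ S' : 𝒱 →L[ℂ] 𝒱,
      (∀ x : 𝒱, (S' x : H) = (TV ∘L Q ∘L ContinuousLinearMap.adjoint TW) (x : H)) ∧
      Function.Bijective S' ∧
      ∃ A : 𝒱 →L[ℂ] 𝒱,
        (∀ x : 𝒱, A (S' x) = x ∧ S' (A x) = x) ∧
        ∀ (f : H) (hf : (TV ∘L Q ∘L ContinuousLinearMap.adjoint TW) f ∈ 𝒱),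
          (A ⟨(TV ∘L Q ∘L ContinuousLinearMap.adjoint TW) f, hf⟩ : H) = P f := by
  set S : H →L[ℂ] H := TV ∘L Q ∘L ContinuousLinearMap.adjoint TW with hS
  -- S maps into 𝒱
  have hSmem : ∀ f : H, S f ∈ 𝒱 := by
    intro f
    have : S f ∈ LinearMap.range (TV : lp (fun i => V i) 2 →ₗ[ℂ] H) := ⟨Q (ContinuousLinearMap.adjoint TW f), rfl⟩
    rwa [hVfr] at this
  -- P fixes 𝒱
  have hPfix : ∀ x ∈ 𝒱, P x = x := by
    intro x hx
    rw [← hPran] at hx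
    obtain ⟨y, rfl⟩ := hx
    have := congrArg (fun T : H →L[ℂ] H => T y) hPidem
    simpa using this
  have hPmem : ∀ f : H, P f ∈ 𝒱 := fun f => hPran ▸ ⟨f, rfl⟩
  -- E : 𝒱 → 𝒱, E x = (P - S) x
  have hPS : ∀ x : H, (P - S) x ∈ 𝒱 := fun x => by
    simpa using 𝒱.sub_mem (hPmem x) (hSmem x)
  set E : 𝒱 →L[ℂ] 𝒱 :=
    ContinuousLinearMap.codRestrict ((P - S) ∘L 𝒱.subtypeL) 𝒱 (fun x => hPS x) with hE
  have hEnorm : ‖E‖ < 1 := by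
    have h1 : ‖E‖ ≤ ε := by
      apply ContinuousLinearMap.opNorm_le_bound _ (le_trans (norm_nonneg _) hdual)
      intro x
      have : ‖E x‖ = ‖(P - S) (x : H)‖ := rfl
      rw [this]
      calc ‖(P - S) (x : H)‖ ≤ ‖P - S‖ * ‖(x : H)‖ := (P - S).le_opNorm _
        _ ≤ ε * ‖x‖ := by
            apply mul_le_mul_of_nonneg_right _ (norm_nonneg _)
            rwa [norm_sub_rev]
    exact lt_of_le_of_lt h1 hε
  have hSP : ∀ x : 𝒱, ((1 - E) x : H) = S (x : H) := by
    intro x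
    have : ((1 - E) x : H) = (x : H) - (P - S) (x : H) := rfl
    rw [this]
    simp [hPfix (x : H) x.2]
  refine ⟨hSmem, (1 : 𝒱 →L[ℂ] 𝒱) - E, hSP, ?_, ?_⟩
  · -- bijectivity
    have hu := Units.oneSub E hEnorm
    have h1 : ((Units.oneSub E hEnorm : (𝒱 →L[ℂ] 𝒱)ˣ) : 𝒱 →L[ℂ] 𝒱) = 1 - E := rfl
    have : Function.Bijective ((Units.oneSub E hEnorm : (𝒱 →L[ℂ] 𝒱)ˣ) : 𝒱 →L[ℂ] 𝒱) := by
      constructor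
      · intro a b hab
        have := congrArg (fun T : 𝒱 →L[ℂ] 𝒱 => T a) (Units.inv_mul (Units.oneSub E hEnorm))
        calc a = ((Units.oneSub E hEnorm)⁻¹ : (𝒱 →L[ℂ] 𝒱)ˣ).val (((Units.oneSub E hEnorm) : (𝒱 →L[ℂ] 𝒱)ˣ).val a) := by
                have := congrArg (fun T : 𝒱 →L[ℂ] 𝒱 => T a) (Units.inv_mul (Units.oneSub E hEnorm))
                simpa [ContinuousLinearMap.mul_apply] using this.symm
          _ = ((Units.oneSub E hEnorm)⁻¹ : (𝒱 →L[ℂ] 𝒱)ˣ).val (((Units.oneSub E hEnorm) : (𝒱 →L[ℂ] 𝒱)ˣ).val b) := by rw [hab]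
          _ = b := by
                have := congrArg (fun T : 𝒱 →L[ℂ] 𝒱 => T b) (Units.inv_mul (Units.oneSub E hEnorm))
                simpa [ContinuousLinearMap.mul_apply] using this
      · intro y
        refine ⟨((Units.oneSub E hEnorm)⁻¹ : (𝒱 →L[ℂ] 𝒱)ˣ).val y, ?_⟩
        have := congrArg (fun T : 𝒱 →L[ℂ] 𝒱 => T y) (Units.mul_inv (Units.oneSub E hEnorm))
        simpa [ContinuousLinearMap.mul_apply] using this
    rwa [h1] at this
  · -- inverse A
    set A : 𝒱 →L[ℂ] 𝒱 := ((Units.oneSub E hEnorm)⁻¹ : (𝒱 →L[ℂ] 𝒱)ˣ).val with hA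
    have hAS : ∀ x : 𝒱, A ((1 - E) x) = x := by
      intro x
      have := congrArg (fun T : 𝒱 →L[ℂ] 𝒱 => T x) (Units.inv_mul (Units.oneSub E hEnorm))
      simpa [ContinuousLinearMap.mul_apply, hA] using this
    have hSA : ∀ x : 𝒱, (1 - E) (A x) = x := by
      intro x
      have := congrArg (fun T : 𝒱 →L[ℂ] 𝒱 => T x) (Units.mul_inv (Units.oneSub E hEnorm))
      simpa [ContinuousLinearMap.mul_apply, hA] using this
    refine ⟨A, fun x => ⟨hAS x, hSA x⟩, ?_⟩
    intro f hf
    -- key: S (P f) = S f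
    have hker : ContinuousLinearMap.adjoint TW (f - P f) = 0 := by
      have hmem : f - P f ∈ 𝒲ᗮ := by
        rw [← hPker]
        have := congrArg (fun T : H →L[ℂ] H => T f) hPidem
        simp only [ContinuousLinearMap.comp_apply] at this
        simp [LinearMap.mem_ker, map_sub, this]
      refine ext_inner_right ℂ (fun g => ?_)
      rw [ContinuousLinearMap.adjoint_inner_left, inner_zero_left]
      have : TW g ∈ 𝒲 := hWfr ▸ ⟨g, rfl⟩
      exact (Submodule.mem_orthogonal' 𝒲 _).mp hmem _ this
    have hSPf : S (P f) = S f := by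
      have : S f - S (P f) = S (f - P f) := by rw [map_sub]
      have h0 : S (f - P f) = 0 := by
        simp only [hS, ContinuousLinearMap.comp_apply, hker, map_zero]
      have := this.trans h0
      exact (sub_eq_zero.mp this).symm
    have hx : ((1 - E) ⟨P f, hPmem f⟩ : 𝒱) = ⟨S f, hf⟩ := by
      apply Subtype.ext
      rw [hSP]
      exact hSPf
    calc (A ⟨S f, hf⟩ : H) = (A ((1 - E) ⟨P f, hPmem f⟩) : H) := by rw [hx]
      _ = ((⟨P f, hPmem f⟩ : 𝒱) : H) := by rw [hAS]
      _ = P f := rfl
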